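/- arXiv:2507.18080 — 3 statements merged into one kernel-verified Lean document; each statement's English description precedes it below -/
import Mathlib

section
/- Let t > 0 and let G : (0,t) → [0,∞) be integrable on (0,t) and bounded on [a,t) for every a ∈ (0,t). Then there exists a constant C > 0 such that for all ε ∈ (0, 1/2), ∬_{0<u<v<t} G(v−u) / ((u+ε²)(t−v+ε²)) du dv ≤ C (log(1/ε))². -/
open Real MeasureTheory


lemma lint_one_div_add (a e : ℝ) (ha : 0 ≤ a) (he : 0 < e) :
    ∫⁻ x in Set.Ioo (0:ℝ) a, ENNReal.ofReal (1/(x+e)) = ENNReal.ofReal (Real.log ((a+e)/e)) := by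
  have hInt : IntegrableOn (fun x => 1/(x+e)) (Set.Ioo 0 a) := by
    apply (ContinuousOn.integrableOn_Icc ?_).mono_set Set.Ioo_subset_Icc_self
    intro x hx
    exact (continuousAt_const.div (continuousAt_id.add continuousAt_const)
      (by nlinarith [hx.1] : x + e ≠ 0)).continuousWithinAt
  rw [← ofReal_integral_eq_lintegral_ofReal hInt
    ((ae_restrict_iff' measurableSet_Ioo).2 (ae_of_all _ fun x hx => by
      have : 0 < x + e := by nlinarith [hx.1]
      positivity))]
  congr 1
  rw [← integral_Ioc_eq_integral_Ioo, ← intervalIntegral.integral_of_le ha]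
  rw [intervalIntegral.integral_comp_add_right (fun x => 1/x) e, zero_add]
  exact integral_one_div (by
    intro h
    rcases Set.mem_uIcc.1 h with ⟨h1,_⟩|⟨_,h2⟩ <;> linarith)

lemma lint_one_div_sub (a e : ℝ) (ha : 0 ≤ a) (he : 0 < e) :
    ∫⁻ x in Set.Ioo (0:ℝ) a, ENNReal.ofReal (1/(a-x+e)) = ENNReal.ofReal (Real.log ((a+e)/e)) := by
  have hInt : IntegrableOn (fun x => 1/(a-x+e)) (Set.Ioo 0 a) := by
    apply (ContinuousOn.integrableOn_Icc ?_).mono_set Set.Ioo_subset_Icc_self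
    intro x hx
    exact (continuousAt_const.div ((continuousAt_const.sub continuousAt_id).add
      continuousAt_const) (by nlinarith [hx.2] : a - x + e ≠ 0)).continuousWithinAt
  rw [← ofReal_integral_eq_lintegral_ofReal hInt
    ((ae_restrict_iff' measurableSet_Ioo).2 (ae_of_all _ fun x hx => by
      have : 0 < a - x + e := by nlinarith [hx.2]
      positivity))]
  congr 1
  rw [← integral_Ioc_eq_integral_Ioo, ← intervalIntegral.integral_of_le ha]
  have : ∀ x, 1/(a-x+e) = (fun y => 1/y) ((a+e) - x) := by intro x; ring_nf
  simp_rw [this]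
  rw [intervalIntegral.integral_comp_sub_left (fun y => 1/y) (a+e)]
  have h1 : a + e - a = e := by ring
  have h2 : a + e - 0 = a + e := by ring
  rw [h1, h2]
  exact integral_one_div (by
    intro h
    rcases Set.mem_uIcc.1 h with ⟨h1,_⟩|⟨_,h2⟩ <;> linarith)

lemma log_ratio_bound (t ε : ℝ) (ht : 0 < t) (hε0 : 0 < ε) (hε2 : ε < 1/2) :
    Real.log ((t + ε^2)/ε^2) ≤ (Real.log (t+1)/Real.log 2 + 2) * Real.log (1/ε) := by
  have he : (0:ℝ) < ε^2 := by positivity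
  have hL2 : Real.log 2 ≤ Real.log (1/ε) := by
    apply Real.log_le_log (by norm_num)
    rw [le_div_iff₀ hε0]
    linarith
  have hlog2 : (0:ℝ) < Real.log 2 := Real.log_pos (by norm_num)
  have hL : 0 < Real.log (1/ε) := lt_of_lt_of_le hlog2 hL2
  have h1 : Real.log ((t + ε^2)/ε^2) = Real.log (t + ε^2) - Real.log (ε^2) := by
    rw [Real.log_div (by positivity) (by positivity)]
  have h2 : Real.log (ε^2) = -2 * Real.log (1/ε) := by
    rw [Real.log_pow, Real.log_div (by norm_num) (ne_of_gt hε0), Real.log_one]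
    ring
  have h3 : Real.log (t + ε^2) ≤ Real.log (t + 1) := by
    apply Real.log_le_log (by positivity); nlinarith
  have h4 : 0 ≤ Real.log (t+1) := Real.log_nonneg (by linarith)
  have h5 : Real.log (t+1) ≤ Real.log (t+1)/Real.log 2 * Real.log (1/ε) := by
    rw [div_mul_eq_mul_div, le_div_iff₀ hlog2]
    exact mul_le_mul_of_nonneg_left hL2 h4
  rw [h1, h2]
  nlinarith

lemma real_ptwise (t e B u v Gv : ℝ) (ht : 0 < t) (he : 0 < e) (hB : 0 ≤ B)
    (hGv : 0 ≤ Gv) (hu : 0 < u) (huv : u < v) (hv : v < t)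
    (hcase : t/2 ≤ v - u → Gv ≤ B) :
    Gv/((u+e)*(t-v+e)) ≤ B*(1/(u+e))*(1/(t-v+e))
      + (4/t)*(1/(u+e))*Gv + (4/t)*(1/(t-v+e))*Gv := by
  have hue : 0 < u + e := by linarith
  have hve : 0 < t - v + e := by linarith
  have r1 : 0 ≤ B*(1/(u+e))*(1/(t-v+e)) := by positivity
  have r2 : 0 ≤ (4/t)*(1/(u+e))*Gv := by positivity
  have r3 : 0 ≤ (4/t)*(1/(t-v+e))*Gv := by positivity
  rcases le_or_gt (t/2) (v - u) with hc | hc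
  · have hGB : Gv ≤ B := hcase hc
    have : Gv/((u+e)*(t-v+e)) ≤ B/((u+e)*(t-v+e)) := by gcongr
    have heq : B/((u+e)*(t-v+e)) = B*(1/(u+e))*(1/(t-v+e)) := by
      rw [div_eq_mul_inv, mul_inv, one_div, one_div]; ring
    linarith [this, heq ▸ this]
  · have hsum : t/2 < u + (t - v) := by linarith
    rcases le_or_gt (t/4) u with h4 | h4
    · have : Gv/((u+e)*(t-v+e)) ≤ Gv/((t/4)*(t-v+e)) := by
        gcongr <;> linarith
      have heq : Gv/((t/4)*(t-v+e)) = (4/t)*(1/(t-v+e))*Gv := by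
        field_simp
      linarith [heq ▸ this]
    · have h4' : t/4 ≤ t - v := by linarith
      have : Gv/((u+e)*(t-v+e)) ≤ Gv/((u+e)*(t/4)) := by
        gcongr <;> linarith
      have heq : Gv/((u+e)*(t/4)) = (4/t)*(1/(u+e))*Gv := by
        field_simp
      linarith [heq ▸ this]

lemma tonelli_prod (s s' : Set ℝ) (k k' : ℝ → ENNReal)
    (hk : Measurable k) (hk' : Measurable k') :
    ∫⁻ p in s ×ˢ s', k p.1 * k' p.2 = (∫⁻ u in s, k u) * ∫⁻ v in s', k' v := by
  rw [Measure.volume_eq_prod, ← Measure.prod_restrict]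
  exact lintegral_prod_mul hk.aemeasurable hk'.aemeasurable

lemma tonelli_left (s : Set ℝ) (k g : ℝ → ENNReal)
    (hk : Measurable k) (hg : Measurable g) :
    ∫⁻ p in s ×ˢ (Set.univ : Set ℝ), k p.1 * g (p.2 - p.1)
      = (∫⁻ u in s, k u) * ∫⁻ x, g x := by
  rw [Measure.volume_eq_prod, ← Measure.prod_restrict, Measure.restrict_univ]
  have hm : Measurable fun p : ℝ × ℝ => k p.1 * g (p.2 - p.1) := by
    exact (hk.comp measurable_fst).mul (hg.comp (measurable_snd.sub measurable_fst))
  rw [lintegral_prod _ hm.aemeasurable]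
  calc ∫⁻ u, ∫⁻ v, k u * g (v - u) ∂volume ∂(volume.restrict s)
      = ∫⁻ u, k u * ∫⁻ v, g (v - u) ∂volume ∂(volume.restrict s) := by
        refine lintegral_congr fun u => ?_
        exact lintegral_const_mul _ (hg.comp (measurable_id.sub_const u))
    _ = ∫⁻ u, k u * ∫⁻ x, g x ∂volume ∂(volume.restrict s) := by
        refine lintegral_congr fun u => ?_
        rw [lintegral_sub_right_eq_self g u]
    _ = (∫⁻ u in s, k u) * ∫⁻ x, g x := lintegral_mul_const _ hk

lemma tonelli_right (s : Set ℝ) (k g : ℝ → ENNReal)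
    (hk : Measurable k) (hg : Measurable g) :
    ∫⁻ p in (Set.univ : Set ℝ) ×ˢ s, k p.2 * g (p.2 - p.1)
      = (∫⁻ v in s, k v) * ∫⁻ x, g x := by
  rw [Measure.volume_eq_prod, ← Measure.prod_restrict, Measure.restrict_univ]
  have hm : Measurable fun p : ℝ × ℝ => k p.2 * g (p.2 - p.1) := by
    exact (hk.comp measurable_snd).mul (hg.comp (measurable_snd.sub measurable_fst))
  rw [lintegral_prod_symm _ hm.aemeasurable]
  calc ∫⁻ v, ∫⁻ u, k v * g (v - u) ∂volume ∂(volume.restrict s)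
      = ∫⁻ v, k v * ∫⁻ u, g (v - u) ∂volume ∂(volume.restrict s) := by
        refine lintegral_congr fun v => ?_
        exact lintegral_const_mul _ (hg.comp (measurable_const.sub measurable_id))
    _ = ∫⁻ v, k v * ∫⁻ x, g x ∂volume ∂(volume.restrict s) := by
        refine lintegral_congr fun v => ?_
        rw [(Measure.measurePreserving_sub_left volume v).lintegral_comp hg]
    _ = (∫⁻ v in s, k v) * ∫⁻ x, g x := lintegral_mul_const _ hk


lemma final_real (t B M K L : ℝ) (ht : 0 < t) (hB : 0 ≤ B) (hM : 0 ≤ M) (hK : 0 ≤ K)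
    (hL2 : Real.log 2 ≤ L) (hL : 0 < L) :
    B*K^2*L^2 + (4/t)*M*(K*L) + (4/t)*M*(K*L) ≤ (B*K^2 + (8/t)*M*K/Real.log 2 + 1) * L^2 := by
  have hlog2 : (0:ℝ) < Real.log 2 := Real.log_pos (by norm_num)
  have hc2 : (0:ℝ) ≤ (8/t)*M*K := mul_nonneg (mul_nonneg (by positivity) hM) hK
  have key2 : (8/t)*M*K*L ≤ (8/t)*M*K/Real.log 2 * L^2 := by
    rw [div_mul_eq_mul_div ((8/t)*M*K) (Real.log 2) (L^2), le_div_iff₀ hlog2]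
    nlinarith [mul_le_mul_of_nonneg_left hL2 (mul_nonneg hc2 hL.le)]
  have expand : (B*K^2 + (8/t)*M*K/Real.log 2 + 1) * L^2
      = B*K^2*L^2 + (8/t)*M*K/Real.log 2 * L^2 + L^2 := by ring
  have lhs_eq : B*K^2*L^2 + (4/t)*M*(K*L) + (4/t)*M*(K*L)
      = B*K^2*L^2 + (8/t)*M*K*L := by ring
  rw [expand, lhs_eq]
  have := sq_nonneg L
  linarith [key2]

/-- If `G : (0,t) → [0,∞)` is integrable on `(0,t)` and bounded on every `[a,t)`,
then `∬_{0<u<v<t} G(v−u)/((u+ε²)(t−v+ε²)) du dv ≤ C (log(1/ε))²` for all `ε ∈ (0,1/2)`. -/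
theorem double_integral_log_sq_bound (t : ℝ) (ht : 0 < t) (G : ℝ → ℝ)
    (hG_nonneg : ∀ s ∈ Set.Ioo (0 : ℝ) t, 0 ≤ G s)
    (hG_int : IntegrableOn G (Set.Ioo 0 t))
    (hG_bdd : ∀ a ∈ Set.Ioo (0 : ℝ) t, ∃ B : ℝ, ∀ s ∈ Set.Ico a t, G s ≤ B) :
    ∃ C > (0 : ℝ), ∀ ε ∈ Set.Ioo (0 : ℝ) (1 / 2),
      ∫⁻ p in {q : ℝ × ℝ | 0 < q.1 ∧ q.1 < q.2 ∧ q.2 < t},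
          ENNReal.ofReal (G (p.2 - p.1) / ((p.1 + ε ^ 2) * (t - p.2 + ε ^ 2)))
        ≤ ENNReal.ofReal (C * Real.log (1 / ε) ^ 2) := by
  obtain ⟨B₀, hB₀⟩ := hG_bdd (t/2) ⟨by linarith, by linarith⟩
  set B := max B₀ 0 with hBdef
  have hB : 0 ≤ B := le_max_right _ _
  have hBG : ∀ s ∈ Set.Ico (t/2) t, G s ≤ B := fun s hs => (hB₀ s hs).trans (le_max_left _ _)
  set M := ∫ s in Set.Ioo (0:ℝ) t, G s with hMdef
  have hM : 0 ≤ M := setIntegral_nonneg measurableSet_Ioo hG_nonneg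
  have hlog2 : (0:ℝ) < Real.log 2 := Real.log_pos (by norm_num)
  set K := Real.log (t+1)/Real.log 2 + 2 with hKdef
  have hK : 0 < K := by
    have h1 : 0 ≤ Real.log (t+1) := Real.log_nonneg (by linarith)
    have h2 : 0 ≤ Real.log (t+1)/Real.log 2 := div_nonneg h1 hlog2.le
    rw [hKdef]; linarith
  have hc2 : 0 ≤ (8/t)*M*K := mul_nonneg (mul_nonneg (by positivity) hM) hK.le
  refine ⟨B*K^2 + (8/t)*M*K/Real.log 2 + 1, ?_, ?_⟩
  · have h1 : 0 ≤ B*K^2 := mul_nonneg hB (sq_nonneg K)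
    have h2 : 0 ≤ (8/t)*M*K/Real.log 2 := div_nonneg hc2 hlog2.le
    exact add_pos_of_nonneg_of_pos (add_nonneg h1 h2) one_pos
  rintro ε ⟨hε0, hε2⟩
  set e := ε^2 with hedef
  have he : 0 < e := by positivity
  set L := Real.log (1/ε) with hLdef
  have hL2 : Real.log 2 ≤ L := by
    rw [hLdef]
    apply Real.log_le_log (by norm_num)
    rw [le_div_iff₀ hε0]; linarith
  have hL : 0 < L := lt_of_lt_of_le hlog2 hL2
  -- kernels
  set k1 : ℝ → ENNReal := fun u => ENNReal.ofReal (1/(u+e)) with hk1def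
  set k2 : ℝ → ENNReal := fun v => ENNReal.ofReal (1/(t-v+e)) with hk2def
  have hk1 : Measurable k1 :=
    ENNReal.measurable_ofReal.comp (measurable_const.div (measurable_id.add_const e))
  have hk2 : Measurable k2 :=
    ENNReal.measurable_ofReal.comp
      (measurable_const.div ((measurable_const.sub measurable_id).add_const e))
  have hA : ∫⁻ x in Set.Ioo (0:ℝ) t, k1 x ≤ ENNReal.ofReal (K*L) := by
    rw [hk1def, lint_one_div_add t e ht.le he]
    exact ENNReal.ofReal_le_ofReal (log_ratio_bound t ε ht hε0 hε2)
  have hA' : ∫⁻ x in Set.Ioo (0:ℝ) t, k2 x ≤ ENNReal.ofReal (K*L) := by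
    rw [hk2def, lint_one_div_sub t e ht.le he]
    exact ENNReal.ofReal_le_ofReal (log_ratio_bound t ε ht hε0 hε2)
  -- measurable version of G
  have hGm : AEMeasurable ((Set.Ioo (0:ℝ) t).indicator G) volume :=
    (aemeasurable_indicator_iff measurableSet_Ioo).2 hG_int.aestronglyMeasurable.aemeasurable
  set G₀ := hGm.mk _ with hG₀def
  have hG₀meas : Measurable G₀ := hGm.measurable_mk
  have hG₀eq : (Set.Ioo (0:ℝ) t).indicator G =ᵐ[volume] G₀ := hGm.ae_eq_mk
  set g : ℝ → ENNReal := fun s => ENNReal.ofReal (G₀ s) with hgdef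
  have hg : Measurable g := ENNReal.measurable_ofReal.comp hG₀meas
  have hIG : ∫⁻ s, g s = ENNReal.ofReal M := by
    have h1 : ∫⁻ s, g s = ∫⁻ s, ENNReal.ofReal ((Set.Ioo (0:ℝ) t).indicator G s) := by
      apply lintegral_congr_ae
      filter_upwards [hG₀eq] with s hs
      rw [hgdef]; simp only; rw [hs]
    have h2 : ∀ s, ENNReal.ofReal ((Set.Ioo (0:ℝ) t).indicator G s)
        = (Set.Ioo (0:ℝ) t).indicator (fun s => ENNReal.ofReal (G s)) s := fun s => by
      by_cases hs : s ∈ Set.Ioo (0:ℝ) t <;> simp [Set.indicator_apply, hs]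
    rw [h1]; simp_rw [h2]
    rw [lintegral_indicator measurableSet_Ioo]
    rw [← ofReal_integral_eq_lintegral_ofReal hG_int
      ((ae_restrict_iff' measurableSet_Ioo).2 (ae_of_all _ hG_nonneg))]
  -- the set S
  set S : Set (ℝ×ℝ) := {q : ℝ × ℝ | 0 < q.1 ∧ q.1 < q.2 ∧ q.2 < t} with hSdef
  have hSopen : IsOpen S := by
    have : S = {q : ℝ×ℝ | 0 < q.1} ∩ ({q : ℝ×ℝ | q.1 < q.2} ∩ {q : ℝ×ℝ | q.2 < t}) := rfl
    rw [this]
    exact (isOpen_lt continuous_const continuous_fst).inter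
      ((isOpen_lt continuous_fst continuous_snd).inter
        (isOpen_lt continuous_snd continuous_const))
  have hS : MeasurableSet S := hSopen.measurableSet
  -- the three majorants
  set F1 : ℝ×ℝ → ENNReal := fun p => (ENNReal.ofReal B * k1 p.1) * k2 p.2 with hF1def
  set F2 : ℝ×ℝ → ENNReal :=
    fun p => (ENNReal.ofReal (4/t) * k1 p.1) * g (p.2 - p.1) with hF2def
  set F3 : ℝ×ℝ → ENNReal :=
    fun p => (ENNReal.ofReal (4/t) * k2 p.2) * g (p.2 - p.1) with hF3def
  have hsubm : Measurable fun p : ℝ×ℝ => p.2 - p.1 := measurable_snd.sub measurable_fst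
  have hF1 : Measurable F1 :=
    ((measurable_const.mul (hk1.comp measurable_fst)).mul (hk2.comp measurable_snd))
  have hF2 : Measurable F2 :=
    ((measurable_const.mul (hk1.comp measurable_fst)).mul (hg.comp hsubm))
  have hF3 : Measurable F3 :=
    ((measurable_const.mul (hk2.comp measurable_snd)).mul (hg.comp hsubm))
  -- a.e. identification along v - u
  have hnull : volume {s : ℝ | ¬ (Set.Ioo (0:ℝ) t).indicator G s = G₀ s} = 0 := by
    have h := hG₀eq
    rwa [Filter.EventuallyEq, ae_iff] at h
  have hqmp : Measure.QuasiMeasurePreserving (fun p : ℝ×ℝ => p.2 - p.1)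
      ((volume : Measure ℝ).prod volume) volume :=
    (quasiMeasurePreserving_sub volume volume).comp
      Measure.measurePreserving_swap.quasiMeasurePreserving
  have hae : ∀ᵐ p : ℝ×ℝ ∂volume,
      (Set.Ioo (0:ℝ) t).indicator G (p.2 - p.1) = G₀ (p.2 - p.1) := by
    rw [Measure.volume_eq_prod, ae_iff]
    exact hqmp.preimage_null hnull
  -- pointwise a.e. bound on S
  have key : ∀ᵐ p ∂(volume.restrict S),
      ENNReal.ofReal (G (p.2 - p.1) / ((p.1 + e) * (t - p.2 + e))) ≤ F1 p + F2 p + F3 p := by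
    filter_upwards [ae_restrict_of_ae hae, ae_restrict_mem hS] with p hp hpS
    obtain ⟨hu, huv, hv⟩ := hpS
    have hvu : p.2 - p.1 ∈ Set.Ioo (0:ℝ) t := ⟨by linarith, by linarith⟩
    have hg_eq : g (p.2 - p.1) = ENNReal.ofReal (G (p.2 - p.1)) := by
      rw [hgdef]; simp only; rw [← hp, Set.indicator_of_mem hvu]
    have hue : 0 < p.1 + e := by linarith
    have hve : 0 < t - p.2 + e := by linarith
    have hGnn : 0 ≤ G (p.2 - p.1) := hG_nonneg _ hvu
    have hreal := real_ptwise t e B p.1 p.2 (G (p.2 - p.1)) ht he hB hGnn hu huv hv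
      (fun hc => hBG _ ⟨hc, by linarith [hvu.2]⟩)
    have r1 : (0:ℝ) ≤ B*(1/(p.1+e))*(1/(t-p.2+e)) :=
      mul_nonneg (mul_nonneg hB (by positivity)) (by positivity)
    have r2 : (0:ℝ) ≤ (4/t)*(1/(p.1+e))*G (p.2-p.1) :=
      mul_nonneg (mul_nonneg (by positivity) (by positivity)) hGnn
    have r3 : (0:ℝ) ≤ (4/t)*(1/(t-p.2+e))*G (p.2-p.1) :=
      mul_nonneg (mul_nonneg (by positivity) (by positivity)) hGnn
    have e1 : F1 p = ENNReal.ofReal (B*(1/(p.1+e))*(1/(t-p.2+e))) := by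
      rw [hF1def]; simp only
      rw [ENNReal.ofReal_mul (mul_nonneg hB (by positivity)), ENNReal.ofReal_mul hB]
    have e2 : F2 p = ENNReal.ofReal ((4/t)*(1/(p.1+e))*G (p.2-p.1)) := by
      rw [hF2def]; simp only [hg_eq]
      rw [ENNReal.ofReal_mul (mul_nonneg (by positivity : (0:ℝ) ≤ 4/t) (by positivity)),
        ENNReal.ofReal_mul (by positivity : (0:ℝ) ≤ 4/t)]
    have e3 : F3 p = ENNReal.ofReal ((4/t)*(1/(t-p.2+e))*G (p.2-p.1)) := by
      rw [hF3def]; simp only [hg_eq]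
      rw [ENNReal.ofReal_mul (mul_nonneg (by positivity : (0:ℝ) ≤ 4/t) (by positivity)),
        ENNReal.ofReal_mul (by positivity : (0:ℝ) ≤ 4/t)]
    calc ENNReal.ofReal (G (p.2 - p.1) / ((p.1 + e) * (t - p.2 + e)))
        ≤ ENNReal.ofReal (B*(1/(p.1+e))*(1/(t-p.2+e)) + (4/t)*(1/(p.1+e))*G (p.2-p.1)
            + (4/t)*(1/(t-p.2+e))*G (p.2-p.1)) := ENNReal.ofReal_le_ofReal hreal
      _ = ENNReal.ofReal (B*(1/(p.1+e))*(1/(t-p.2+e)))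
            + ENNReal.ofReal ((4/t)*(1/(p.1+e))*G (p.2-p.1))
            + ENNReal.ofReal ((4/t)*(1/(t-p.2+e))*G (p.2-p.1)) := by
          rw [ENNReal.ofReal_add (add_nonneg r1 r2) r3, ENNReal.ofReal_add r1 r2]
      _ = F1 p + F2 p + F3 p := by rw [e1, e2, e3]
  -- split the integral
  have step1 : ∫⁻ p in S, ENNReal.ofReal (G (p.2 - p.1) / ((p.1 + e) * (t - p.2 + e)))
      ≤ (∫⁻ p in S, F1 p) + (∫⁻ p in S, F2 p) + (∫⁻ p in S, F3 p) := by
    refine (lintegral_mono_ae key).trans ?_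
    rw [lintegral_add_left (f := fun p => F1 p + F2 p) (hF1.add hF2)]
    rw [lintegral_add_left hF1]
  -- bound for F1
  have hSsub1 : S ⊆ Set.Ioo 0 t ×ˢ Set.Ioo 0 t := fun p hp =>
    ⟨⟨hp.1, lt_trans hp.2.1 hp.2.2⟩, ⟨lt_trans hp.1 hp.2.1, hp.2.2⟩⟩
  have bF1 : ∫⁻ p in S, F1 p ≤ ENNReal.ofReal (B*K^2*L^2) := by
    refine (lintegral_mono' (Measure.restrict_mono hSsub1 le_rfl) le_rfl).trans ?_
    rw [hF1def]
    rw [tonelli_prod (Set.Ioo 0 t) (Set.Ioo 0 t) (fun u => ENNReal.ofReal B * k1 u) k2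
      (measurable_const.mul hk1) hk2]
    rw [lintegral_const_mul _ hk1]
    calc ENNReal.ofReal B * (∫⁻ u in Set.Ioo (0:ℝ) t, k1 u) * ∫⁻ v in Set.Ioo (0:ℝ) t, k2 v
        ≤ ENNReal.ofReal B * ENNReal.ofReal (K*L) * ENNReal.ofReal (K*L) :=
          mul_le_mul' (mul_le_mul' le_rfl hA) hA'
      _ = ENNReal.ofReal (B*(K*L)*(K*L)) := by
          rw [ENNReal.ofReal_mul (mul_nonneg hB (mul_nonneg hK.le hL.le)),
            ENNReal.ofReal_mul hB]
      _ = ENNReal.ofReal (B*K^2*L^2) := by congr 1; ring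
  -- bound for F2
  have hSsub2 : S ⊆ Set.Ioo 0 t ×ˢ (Set.univ : Set ℝ) := fun p hp =>
    ⟨⟨hp.1, lt_trans hp.2.1 hp.2.2⟩, trivial⟩
  have bF2 : ∫⁻ p in S, F2 p ≤ ENNReal.ofReal ((4/t)*M*(K*L)) := by
    refine (lintegral_mono' (Measure.restrict_mono hSsub2 le_rfl) le_rfl).trans ?_
    rw [hF2def]
    rw [tonelli_left (Set.Ioo 0 t) (fun u => ENNReal.ofReal (4/t) * k1 u) g
      (measurable_const.mul hk1) hg]
    rw [lintegral_const_mul _ hk1, hIG]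
    calc ENNReal.ofReal (4/t) * (∫⁻ u in Set.Ioo (0:ℝ) t, k1 u) * ENNReal.ofReal M
        ≤ ENNReal.ofReal (4/t) * ENNReal.ofReal (K*L) * ENNReal.ofReal M :=
          mul_le_mul' (mul_le_mul' le_rfl hA) le_rfl
      _ = ENNReal.ofReal ((4/t)*(K*L)*M) := by
          rw [ENNReal.ofReal_mul (mul_nonneg (by positivity : (0:ℝ) ≤ 4/t)
            (mul_nonneg hK.le hL.le)), ENNReal.ofReal_mul (by positivity : (0:ℝ) ≤ 4/t)]
      _ = ENNReal.ofReal ((4/t)*M*(K*L)) := by congr 1; ring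
  -- bound for F3
  have hSsub3 : S ⊆ (Set.univ : Set ℝ) ×ˢ Set.Ioo 0 t := fun p hp =>
    ⟨trivial, ⟨lt_trans hp.1 hp.2.1, hp.2.2⟩⟩
  have bF3 : ∫⁻ p in S, F3 p ≤ ENNReal.ofReal ((4/t)*M*(K*L)) := by
    refine (lintegral_mono' (Measure.restrict_mono hSsub3 le_rfl) le_rfl).trans ?_
    rw [hF3def]
    rw [tonelli_right (Set.Ioo 0 t) (fun v => ENNReal.ofReal (4/t) * k2 v) g
      (measurable_const.mul hk2) hg]
    rw [lintegral_const_mul _ hk2, hIG]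
    calc ENNReal.ofReal (4/t) * (∫⁻ v in Set.Ioo (0:ℝ) t, k2 v) * ENNReal.ofReal M
        ≤ ENNReal.ofReal (4/t) * ENNReal.ofReal (K*L) * ENNReal.ofReal M :=
          mul_le_mul' (mul_le_mul' le_rfl hA') le_rfl
      _ = ENNReal.ofReal ((4/t)*(K*L)*M) := by
          rw [ENNReal.ofReal_mul (mul_nonneg (by positivity : (0:ℝ) ≤ 4/t)
            (mul_nonneg hK.le hL.le)), ENNReal.ofReal_mul (by positivity : (0:ℝ) ≤ 4/t)]
      _ = ENNReal.ofReal ((4/t)*M*(K*L)) := by congr 1; ring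
  -- combine
  refine step1.trans ?_
  calc (∫⁻ p in S, F1 p) + (∫⁻ p in S, F2 p) + (∫⁻ p in S, F3 p)
      ≤ ENNReal.ofReal (B*K^2*L^2) + ENNReal.ofReal ((4/t)*M*(K*L))
          + ENNReal.ofReal ((4/t)*M*(K*L)) := add_le_add (add_le_add bF1 bF2) bF3
    _ = ENNReal.ofReal (B*K^2*L^2 + (4/t)*M*(K*L) + (4/t)*M*(K*L)) := by
        rw [ENNReal.ofReal_add (add_nonneg (mul_nonneg (mul_nonneg hB (sq_nonneg K))
          (sq_nonneg L)) (mul_nonneg (mul_nonneg (by positivity) hM)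
          (mul_nonneg hK.le hL.le))) (mul_nonneg (mul_nonneg (by positivity) hM)
          (mul_nonneg hK.le hL.le)),
          ENNReal.ofReal_add (mul_nonneg (mul_nonneg hB (sq_nonneg K)) (sq_nonneg L))
          (mul_nonneg (mul_nonneg (by positivity) hM) (mul_nonneg hK.le hL.le))]
    _ ≤ ENNReal.ofReal ((B*K^2 + (8/t)*M*K/Real.log 2 + 1) * L^2) :=
        ENNReal.ofReal_le_ofReal (final_real t B M K L ht hB hM hK.le hL2 hL)
end

section
/- Let t > 0 and let G : (0,t) → [0,∞) be integrable. Then there exists a constant C > 0 such that for all ε ∈ (0, 1/2), ∬_{0<u<v<2t/3} G(v−u)/(u+ε²) du dv ≤ C log(1/ε). -/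
open Real MeasureTheory

/-- If `G : (0,t) → [0,∞)` is integrable, then
`∬_{0<u<v<2t/3} G(v−u)/(u+ε²) du dv ≤ C log(1/ε)` for all `ε ∈ (0,1/2)`. -/
theorem double_integral_log_bound (t : ℝ) (ht : 0 < t) (G : ℝ → ℝ)
    (hG_nonneg : ∀ s ∈ Set.Ioo (0 : ℝ) t, 0 ≤ G s)
    (hG_int : IntegrableOn G (Set.Ioo 0 t)) :
    ∃ C > (0 : ℝ), ∀ ε ∈ Set.Ioo (0 : ℝ) (1 / 2),
      ∫⁻ p in {q : ℝ × ℝ | 0 < q.1 ∧ q.1 < q.2 ∧ q.2 < 2 * t / 3},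
          ENNReal.ofReal (G (p.2 - p.1) / (p.1 + ε ^ 2))
        ≤ ENNReal.ofReal (C * Real.log (1 / ε)) := by
  set L : ℝ := 2 * t / 3 with hLdef
  have hL : 0 < L := by positivity
  have hLt : L < t := by
    simp only [hLdef]; linarith
  set A : ℝ := ∫ w in Set.Ioo (0:ℝ) t, G w with hAdef
  have hA0 : 0 ≤ A := setIntegral_nonneg measurableSet_Ioo hG_nonneg
  set K : ℝ := Real.log (L + 1) / Real.log 2 + 2 with hKdef
  have hlog2 : 0 < Real.log 2 := Real.log_pos (by norm_num)
  have hlogL : 0 < Real.log (L + 1) := Real.log_pos (by linarith)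
  have hK : 0 < K := by positivity
  refine ⟨(A + 1) * K, by positivity, ?_⟩
  intro ε hε
  obtain ⟨hε0, hε2⟩ := hε
  have hε2pos : (0:ℝ) < ε ^ 2 := by positivity
  have hlogε : Real.log 2 ≤ Real.log (1 / ε) := by
    apply Real.log_le_log (by norm_num)
    rw [le_div_iff₀ hε0]; linarith
  have hlogεpos : 0 < Real.log (1 / ε) := lt_of_lt_of_le hlog2 hlogε
  -- measurable representative of G
  obtain ⟨G', hG'meas, hGG'⟩ := hG_int.1
  -- the two one-variable functions
  set g1 : ℝ → ENNReal := (Set.Ioo (0:ℝ) L).indicator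
      (fun u => ENNReal.ofReal ((u + ε ^ 2)⁻¹)) with hg1def
  set g2 : ℝ → ENNReal := (Set.Ioo (0:ℝ) t).indicator
      (fun w => ENNReal.ofReal (G' w)) with hg2def
  have hg1meas : Measurable g1 := by
    apply Measurable.indicator _ measurableSet_Ioo
    exact (measurable_id.add_const _).inv.ennreal_ofReal
  have hg2meas : Measurable g2 := by
    apply Measurable.indicator _ measurableSet_Ioo
    exact hG'meas.measurable.ennreal_ofReal
  -- value of ∫⁻ g2
  have hg2int : ∫⁻ w, g2 w = ENNReal.ofReal A := by
    rw [hg2def, lintegral_indicator measurableSet_Ioo _]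
    rw [hAdef, ofReal_integral_eq_lintegral_ofReal hG_int
      ((ae_restrict_iff' measurableSet_Ioo).2 (Filter.Eventually.of_forall hG_nonneg))]
    exact lintegral_congr_ae (hGG'.fun_comp ENNReal.ofReal).symm
  -- value of ∫⁻ g1
  have hcont : ContinuousOn (fun u : ℝ => (u + ε ^ 2)⁻¹) (Set.Icc 0 L) := by
    apply ContinuousOn.inv₀ (by fun_prop)
    intro x hx; nlinarith [hx.1]
  have hint1 : IntegrableOn (fun u : ℝ => (u + ε ^ 2)⁻¹) (Set.Ioo 0 L) :=
    (hcont.integrableOn_Icc).mono_set Set.Ioo_subset_Icc_self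
  have hg1val : ∫⁻ u, g1 u
      = ENNReal.ofReal (∫ u in Set.Ioo (0:ℝ) L, (u + ε ^ 2)⁻¹) := by
    rw [hg1def, lintegral_indicator measurableSet_Ioo _]
    rw [ofReal_integral_eq_lintegral_ofReal hint1]
    apply (ae_restrict_iff' measurableSet_Ioo).2
    apply Filter.Eventually.of_forall
    intro x hx
    have := hx.1
    positivity
  have hIval : ∫ u in Set.Ioo (0:ℝ) L, (u + ε ^ 2)⁻¹
      = Real.log ((L + ε ^ 2) / ε ^ 2) := by
    rw [← integral_Ioc_eq_integral_Ioo, ← intervalIntegral.integral_of_le hL.le]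
    rw [intervalIntegral.integral_comp_add_right (fun x => x⁻¹) (ε ^ 2), zero_add]
    rw [integral_inv]
    intro hmem
    rw [Set.uIcc_of_le (by nlinarith)] at hmem
    exact absurd hmem.1 (by nlinarith)
  have hIbound : Real.log ((L + ε ^ 2) / ε ^ 2) ≤ K * Real.log (1 / ε) := by
    have hε1 : ε ^ 2 < 1 := by nlinarith
    rw [Real.log_div (by positivity) (by positivity)]
    have h1 : Real.log (L + ε ^ 2) ≤ Real.log (L + 1) :=
      Real.log_le_log (by positivity) (by linarith)
    have h2 : Real.log (ε ^ 2) = - (2 * Real.log (1 / ε)) := by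
      rw [Real.log_pow, one_div, Real.log_inv]
      push_cast
      ring
    have h3 : Real.log (L + 1) ≤ (Real.log (L + 1) / Real.log 2) * Real.log (1 / ε) := by
      rw [div_mul_eq_mul_div, le_div_iff₀ hlog2]
      exact mul_le_mul_of_nonneg_left hlogε hlogL.le
    rw [h2, hKdef]
    nlinarith
  -- the main pointwise / measure-theoretic reduction
  have hS : MeasurableSet {q : ℝ × ℝ | 0 < q.1 ∧ q.1 < q.2 ∧ q.2 < L} := by
    apply MeasurableSet.inter (measurableSet_lt measurable_const measurable_fst)
    exact MeasurableSet.inter (measurableSet_lt measurable_fst measurable_snd)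
      (measurableSet_lt measurable_snd measurable_const)
  have hMP : MeasurePreserving (fun z : ℝ × ℝ => (z.1, z.2 - z.1))
      (volume : Measure (ℝ × ℝ)) volume := by
    rw [Measure.volume_eq_prod]
    exact measurePreserving_prod_sub volume volume
  -- a.e. statement : G = G' composed with the shear
  have hae : ∀ᵐ p : ℝ × ℝ, p.2 - p.1 ∈ Set.Ioo (0:ℝ) t → G (p.2 - p.1) = G' (p.2 - p.1) := by
    have h1 : ∀ᵐ w : ℝ, w ∈ Set.Ioo (0:ℝ) t → G w = G' w :=
      (ae_restrict_iff' measurableSet_Ioo).1 hGG'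
    obtain ⟨N, hNsub, hNmeas, hNnull⟩ := exists_measurable_superset_of_null h1
    have hplane : volume ((fun z : ℝ × ℝ => (z.1, z.2 - z.1)) ⁻¹' (Set.univ ×ˢ N)) = 0 := by
      rw [hMP.measure_preimage (MeasurableSet.univ.prod hNmeas).nullMeasurableSet,
        Measure.volume_eq_prod, Measure.prod_prod, hNnull, mul_zero]
    rw [ae_iff]
    refine measure_mono_null ?_ hplane
    intro p hp
    simp only [Set.mem_setOf_eq, not_forall] at hp
    obtain ⟨hmem, hne⟩ := hp
    exact ⟨Set.mem_univ _, hNsub (fun h => hne (h hmem))⟩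
  calc ∫⁻ p in {q : ℝ × ℝ | 0 < q.1 ∧ q.1 < q.2 ∧ q.2 < L},
        ENNReal.ofReal (G (p.2 - p.1) / (p.1 + ε ^ 2))
      ≤ ∫⁻ p : ℝ × ℝ, g1 p.1 * g2 (p.2 - p.1) := by
        refine le_trans (lintegral_mono_ae ?_)
          (setLIntegral_le_lintegral _ (fun p : ℝ × ℝ => g1 p.1 * g2 (p.2 - p.1)))
        rw [ae_restrict_iff' hS]
        filter_upwards [hae] with p hp hpS
        obtain ⟨h1, h2, h3⟩ := hpS
        have hw : p.2 - p.1 ∈ Set.Ioo (0:ℝ) t := ⟨by linarith, by linarith⟩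
        have hu : p.1 ∈ Set.Ioo (0:ℝ) L := ⟨h1, by linarith⟩
        have hinv : (0:ℝ) ≤ (p.1 + ε ^ 2)⁻¹ := by positivity
        rw [hg1def, hg2def, Set.indicator_of_mem hu, Set.indicator_of_mem hw,
          ← hp hw, div_eq_mul_inv, mul_comm, ENNReal.ofReal_mul hinv]
      _ = ∫⁻ q : ℝ × ℝ, g1 q.1 * g2 q.2 :=
        hMP.lintegral_comp ((hg1meas.comp measurable_fst).mul (hg2meas.comp measurable_snd))
      _ = (∫⁻ u, g1 u) * ∫⁻ w, g2 w := by
        rw [Measure.volume_eq_prod]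
        exact lintegral_prod_mul hg1meas.aemeasurable hg2meas.aemeasurable
      _ ≤ ENNReal.ofReal ((A + 1) * K * Real.log (1 / ε)) := by
        rw [hg1val, hg2int, hIval, ← ENNReal.ofReal_mul (Real.log_nonneg ?_)]
        · apply ENNReal.ofReal_le_ofReal
          calc Real.log ((L + ε ^ 2) / ε ^ 2) * A
              ≤ (K * Real.log (1 / ε)) * A := by
                apply mul_le_mul_of_nonneg_right hIbound hA0
            _ ≤ (A + 1) * K * Real.log (1 / ε) := by
                nlinarith [mul_nonneg hK.le hlogεpos.le]
        · rw [le_div_iff₀ hε2pos]; nlinarith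
end

section
/- Fix α > 2, r > 0 and t > 0, and set b_N = N^{−(α−1)}. There exists a constant C₀ > 0 (depending on α, r, t) such that for every C ≥ C₀, every integer N ≥ 2, every integer n with N/2 ≤ n ≤ N, and every s ∈ [0, b_N], C·((n+1)^α − n^α)·s − 2·(2s)^{1/α} + 7r/(10N) > 0. -/
/-- Separation inequality: for `α > 2`, `r > 0`, `t > 0`, there is `C₀ > 0` such that for all
`C ≥ C₀`, integers `N ≥ 2`, integers `n` with `N/2 ≤ n ≤ N`, and `s ∈ [0, N^{−(α−1)}]`,
`C·((n+1)^α − n^α)·s − 2·(2s)^{1/α} + 7r/(10N) > 0`. -/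
theorem cone_separation (α r t : ℝ) (hα : 2 < α) (hr : 0 < r) (ht : 0 < t) :
    ∃ C₀ > (0 : ℝ), ∀ C ≥ C₀, ∀ N : ℕ, 2 ≤ N → ∀ n : ℕ,
      (N : ℝ) / 2 ≤ n → n ≤ N →
      ∀ s ∈ Set.Icc (0 : ℝ) ((N : ℝ) ^ (-(α - 1))),
        C * (((n : ℝ) + 1) ^ α - (n : ℝ) ^ α) * s - 2 * (2 * s) ^ (1 / α)
          + 7 * r / (10 * N) > 0 := by
  have hα0 : (0:ℝ) < α := by linarith
  have hα1 : (0:ℝ) ≤ α - 1 := by linarith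
  set Y : ℝ := (7*r/40) ^ (1-α) with hYdef
  have hY0 : 0 < Y := Real.rpow_pos_of_pos (by linarith) _
  refine ⟨4 * Y + 1, by positivity, ?_⟩
  intro C hC N hN n hn1 hn2 s hs
  obtain ⟨hs0, hsb⟩ := hs
  have hC0 : (0:ℝ) < C := lt_of_lt_of_le (by positivity) hC
  have hN0 : (0:ℝ) < N := by
    have : (2:ℝ) ≤ N := by exact_mod_cast hN
    linarith
  have hn0 : (0:ℝ) < n := by linarith
  set D : ℝ := 7 * r / (10 * N) with hDdef
  have hD0 : 0 < D := by positivity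
  -- the difference-of-powers lower bound
  set P : ℝ := ((N:ℝ)/2) ^ (α-1) with hPdef
  have hP0 : 0 < P := Real.rpow_pos_of_pos (by linarith) _
  have hdiff : P ≤ ((n:ℝ) + 1) ^ α - (n:ℝ) ^ α := by
    have e1 : ((n:ℝ) + 1) ^ α = ((n:ℝ) + 1) ^ (α-1) * ((n:ℝ) + 1) := by
      rw [← Real.rpow_add_one (by positivity) (α-1)]; ring_nf
    have e2 : (n:ℝ) ^ α = (n:ℝ) ^ (α-1) * (n:ℝ) := by
      rw [← Real.rpow_add_one (ne_of_gt hn0) (α-1)]; ring_nf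
    have hmono : (n:ℝ) ^ (α-1) ≤ ((n:ℝ)+1) ^ (α-1) :=
      Real.rpow_le_rpow hn0.le (by linarith) hα1
    have hNn : P ≤ (n:ℝ) ^ (α-1) :=
      Real.rpow_le_rpow (by linarith) hn1 hα1
    have hmul : (n:ℝ)^(α-1) * ((n:ℝ)+1) ≤ ((n:ℝ)+1)^(α-1) * ((n:ℝ)+1) :=
      mul_le_mul_of_nonneg_right hmono (by linarith)
    rw [e1, e2]; nlinarith
  by_cases hcase : 2 * (2*s) ^ (1/α) < D
  · have h1 : 0 ≤ C * (((n:ℝ) + 1) ^ α - (n:ℝ) ^ α) * s :=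
      mul_nonneg (mul_nonneg hC0.le (by linarith)) hs0
    linarith
  · push_neg at hcase
    set u : ℝ := (2*s) ^ (1/α) with hudef
    have hu : D/2 ≤ u := by linarith
    have hu0 : 0 < u := lt_of_lt_of_le (by positivity) hu
    have h2s : u ^ α = 2 * s := by
      rw [hudef, ← Real.rpow_mul (by linarith : (0:ℝ) ≤ 2*s),
        one_div_mul_cancel (ne_of_gt hα0), Real.rpow_one]
    have huα : u ^ (α-1) * u = 2 * s := by
      rw [← Real.rpow_add_one (ne_of_gt hu0) (α-1), show α - 1 + 1 = α by ring, h2s]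
    set Q : ℝ := (D/2) ^ (α-1) with hQdef
    set X : ℝ := (7*r/40) ^ (α-1) with hXdef
    have hX0 : 0 < X := Real.rpow_pos_of_pos (by linarith) _
    have hQu : Q ≤ u ^ (α-1) := Real.rpow_le_rpow (by positivity) hu hα1
    have hPQ : P * Q = X := by
      rw [hPdef, hQdef, hXdef, ← Real.mul_rpow (by linarith) (by positivity)]
      congr 1
      rw [hDdef]
      field_simp
      ring
    have hXY : Y * X = 1 := by
      rw [hYdef, hXdef, ← Real.rpow_add (by linarith),
        show 1 - α + (α - 1) = 0 by ring, Real.rpow_zero]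
    have s1 : (4*Y+1) * P * Q ≤ (4*Y+1) * P * (u ^ (α-1)) :=
      mul_le_mul_of_nonneg_left hQu (by positivity)
    have s2 : (4*Y+1) * P * Q = 4 + X := by
      rw [mul_assoc, hPQ]; linear_combination 4 * hXY
    have s3 : 4 ≤ (4*Y+1) * P * (u ^ (α-1)) := by nlinarith
    have s4 : 4 * u ≤ (4*Y+1) * P * (u ^ (α-1)) * u :=
      mul_le_mul_of_nonneg_right s3 hu0.le
    have s5 : (4*Y+1) * P * (u ^ (α-1)) * u = (4*Y+1) * P * (2*s) := by
      rw [mul_assoc, huα]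
    have s6 : (4*Y+1) * P * (2*s) = 2 * ((4*Y+1) * P * s) := by ring
    have key : 2 * u ≤ (4*Y+1) * P * s := by linarith
    have hfin : 2 * u ≤ C * (((n:ℝ) + 1) ^ α - (n:ℝ) ^ α) * s :=
      le_trans key (mul_le_mul_of_nonneg_right
        (mul_le_mul hC hdiff hP0.le hC0.le) hs0)
    linarith
end
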